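/- arXiv:1504.07526 — 2 statements merged into one kernel-verified Lean document; each statement's English description precedes it below -/
import Mathlib

section
/- Let Λ : ℝ^d → ℝ be convex with Λ(0)=0, let I be its conjugate, and let a ∈ Δ^{N-1} be a probability vector. Define Λ̃(λ) = ∑_{j=1}^N Λ(a_j λ) and let Ĩ be the conjugate of Λ̃. Then I(x) ≤ Ĩ(x) ≤ N·I(x) for every x ∈ ℝ^d. -/
open RealInnerProductSpace

theorem rate_between_isolation_and_fusion {d N : ℕ} (hN : 1 ≤ N)
    (Λ : EuclideanSpace ℝ (Fin d) → ℝ)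
    (hconv : ConvexOn ℝ Set.univ Λ) (hdiff : Differentiable ℝ Λ) (h0 : Λ 0 = 0)
    (a : Fin N → ℝ) (ha : ∀ j, 0 ≤ a j) (hsum : ∑ j, a j = 1)
    (I Itilde : EuclideanSpace ℝ (Fin d) → EReal)
    (hI : ∀ x, I x = ⨆ lam : EuclideanSpace ℝ (Fin d),
      ((⟪lam, x⟫ - Λ lam : ℝ) : EReal))
    (hItilde : ∀ x, Itilde x = ⨆ lam : EuclideanSpace ℝ (Fin d),
      ((⟪lam, x⟫ - ∑ j, Λ (a j • lam) : ℝ) : EReal))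
    (x : EuclideanSpace ℝ (Fin d)) :
    I x ≤ Itilde x ∧ Itilde x ≤ (N : EReal) * I x := by
  have haj1 : ∀ j, a j ≤ 1 := by
    intro j
    calc a j ≤ ∑ i, a i := Finset.single_le_sum (fun i _ => ha i) (Finset.mem_univ j)
    _ = 1 := hsum
  have hΛle : ∀ (lam : EuclideanSpace ℝ (Fin d)) j, Λ (a j • lam) ≤ a j * Λ lam := by
    intro lam j
    have := hconv.2 (Set.mem_univ lam) (Set.mem_univ (0 : EuclideanSpace ℝ (Fin d)))
      (ha j) (by linarith [haj1 j]) (by ring : a j + (1 - a j) = 1)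
    simpa [h0, smul_zero] using this
  have htilde_le : ∀ lam, ∑ j, Λ (a j • lam) ≤ Λ lam := by
    intro lam
    calc ∑ j, Λ (a j • lam) ≤ ∑ j, a j * Λ lam :=
          Finset.sum_le_sum fun j _ => hΛle lam j
    _ = Λ lam := by rw [← Finset.sum_mul, hsum, one_mul]
  have hI0 : (0 : EReal) ≤ I x := by
    rw [hI x]
    have := le_iSup (fun lam : EuclideanSpace ℝ (Fin d) =>
      ((⟪lam, x⟫ - Λ lam : ℝ) : EReal)) 0
    simpa [h0] using this
  constructor
  · rw [hI x, hItilde x]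
    refine iSup_mono fun lam => ?_
    exact_mod_cast sub_le_sub_left (htilde_le lam) _
  · by_cases htop : I x = ⊤
    · have : (N : EReal) * I x = ⊤ := by
        rw [htop]
        refine EReal.mul_top_of_pos ?_
        exact_mod_cast Nat.cast_pos.mpr (by omega : 0 < N)
      simp [this]
    · have hbot : I x ≠ ⊥ := fun h => by simp [h] at hI0
      set c := (I x).toReal with hc
      have hIc : I x = (c : EReal) := (EReal.coe_toReal htop hbot).symm
      have hterm : ∀ (lam : EuclideanSpace ℝ (Fin d)) j,
          ⟪a j • lam, x⟫ - Λ (a j • lam) ≤ c := by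
        intro lam j
        have := le_iSup (fun lam : EuclideanSpace ℝ (Fin d) =>
          ((⟪lam, x⟫ - Λ lam : ℝ) : EReal)) (a j • lam)
        rw [← hI x, hIc] at this
        exact_mod_cast this
      rw [hItilde x, hIc]
      refine iSup_le fun lam => ?_
      have hinner : (⟪lam, x⟫ : ℝ) = ∑ j, ⟪a j • lam, x⟫ := by
        simp only [real_inner_smul_left]
        rw [← Finset.sum_mul, hsum, one_mul]
      have hreal : ⟪lam, x⟫ - ∑ j, Λ (a j • lam) ≤ (N : ℝ) * c := by
        rw [hinner, ← Finset.sum_sub_distrib]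
        calc ∑ j, (⟪a j • lam, x⟫ - Λ (a j • lam)) ≤ ∑ _j : Fin N, c :=
              Finset.sum_le_sum fun j _ => hterm lam j
        _ = (N : ℝ) * c := by simp [mul_comm]
      have : ((N : ℝ) : EReal) * (c : EReal) = (((N : ℝ) * c : ℝ) : EReal) :=
        (EReal.coe_mul _ _).symm
      calc ((⟪lam, x⟫ - ∑ j, Λ (a j • lam) : ℝ) : EReal)
          ≤ (((N : ℝ) * c : ℝ) : EReal) := by exact_mod_cast hreal
        _ = (N : EReal) * (c : EReal) := by
            rw [EReal.coe_mul]; norm_cast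
end

section
/- Let Λ_M : ℝ^d → ℝ be convex and differentiable, let θ ∈ ℝ^d satisfy ∇Λ_M(λ) = ∇Λ(λ) + λ/M where Λ is convex differentiable with ∇Λ(0) = θ, and suppose η ∈ ℝ^d satisfies ∇Λ_M(η) = x. Then ‖η‖ ≤ M‖x − θ‖. -/
open RealInnerProductSpace

theorem gradient_preimage_bounded {d : ℕ}
    (Λ : EuclideanSpace ℝ (Fin d) → ℝ)
    (hconv : ConvexOn ℝ Set.univ Λ) (hdiff : Differentiable ℝ Λ)
    (θ : EuclideanSpace ℝ (Fin d)) (hgrad0 : HasGradientAt Λ θ 0)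
    (M : ℝ) (hM : 0 < M)
    (x η : EuclideanSpace ℝ (Fin d))
    (hη : HasGradientAt (fun lam => Λ lam + ‖lam‖ ^ 2 / (2 * M)) x η) :
    ‖η‖ ≤ M * ‖x - θ‖ := by
  -- gradient of the quadratic part at η
  have hq : HasGradientAt (fun lam : EuclideanSpace ℝ (Fin d) => ‖lam‖ ^ 2 / (2 * M))
      ((1 / M) • η) η := by
    rw [hasGradientAt_iff_hasFDerivAt]
    have h1 : HasFDerivAt (fun lam : EuclideanSpace ℝ (Fin d) => ‖lam‖ ^ 2)
        (2 • (innerSL ℝ η)) η := by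
      simpa using (hasFDerivAt_id η).norm_sq
    have h2 := h1.const_mul (1 / (2 * M))
    have heq : (fun lam : EuclideanSpace ℝ (Fin d) => 1 / (2 * M) * ‖lam‖ ^ 2)
        = fun lam : EuclideanSpace ℝ (Fin d) => ‖lam‖ ^ 2 / (2 * M) := by
      funext lam; ring
    rw [heq] at h2
    convert h2 using 1
    ext v
    simp [real_inner_smul_left]
    ext v
    simp [real_inner_smul_left]
    ring
  -- gradient of Λ at η
  have hΛη : HasGradientAt Λ (x - (1 / M) • η) η := by
    rw [hasGradientAt_iff_hasFDerivAt]
    have h3 := (hη.hasFDerivAt).sub (hq.hasFDerivAt)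
    have heq : (fun lam : EuclideanSpace ℝ (Fin d) =>
        (Λ lam + ‖lam‖ ^ 2 / (2 * M)) - ‖lam‖ ^ 2 / (2 * M)) = Λ := by
      funext lam; ring
    simp only [Pi.sub_def] at h3
    rw [heq] at h3
    rw [map_sub]
    exact h3
  -- the line t ↦ t • η
  have hline : ∀ t : ℝ, HasDerivAt (fun s : ℝ => s • η) η t := by
    intro t
    simpa using (hasDerivAt_id t).smul_const η
  set φ : ℝ → ℝ := fun t => Λ (t • η) with hφ
  have hφ0 : HasDerivAt φ ⟪θ, η⟫ 0 := by
    have hg : HasFDerivAt Λ (InnerProductSpace.toDual ℝ _ θ) ((0 : ℝ) • η) := by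
      rw [zero_smul]; exact hgrad0.hasFDerivAt
    have := hg.comp_hasDerivAt 0 (hline 0)
    simp [Function.comp] at this
    exact this
  have hφ1 : HasDerivAt φ ⟪x - (1 / M) • η, η⟫ 1 := by
    have hg : HasFDerivAt Λ (InnerProductSpace.toDual ℝ _ (x - (1 / M) • η)) ((1 : ℝ) • η) := by
      rw [one_smul]; exact hΛη.hasFDerivAt
    have h4 := hg.comp_hasDerivAt 1 (hline 1)
    rw [InnerProductSpace.toDual_apply_apply] at h4
    exact h4
  have hφconv : ConvexOn ℝ Set.univ φ := by
    have hA := hconv.comp_affineMap (AffineMap.lineMap (0 : EuclideanSpace ℝ (Fin d)) η)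
    have : (Λ ∘ (AffineMap.lineMap (0 : EuclideanSpace ℝ (Fin d)) η)) = φ := by
      funext t; simp [AffineMap.lineMap_apply, hφ]
    rw [this] at hA
    simpa using hA
  have hφdiff : ∀ t ∈ (Set.univ : Set ℝ), DifferentiableAt ℝ φ t := by
    intro t _
    exact ((hdiff (t • η)).comp t (hline t).differentiableAt : _)
  have hmono := hφconv.monotoneOn_deriv hφdiff (Set.mem_univ 0) (Set.mem_univ 1) zero_le_one
  rw [hφ0.deriv, hφ1.deriv] at hmono
  have hns : ⟪η, η⟫ = ‖η‖ ^ 2 := real_inner_self_eq_norm_sq η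
  rw [inner_sub_left, real_inner_smul_left, hns] at hmono
  have key : (1 / M) * ‖η‖ ^ 2 ≤ ⟪x - θ, η⟫ := by
    rw [inner_sub_left]
    linarith [hmono]
  have hcs : ⟪x - θ, η⟫ ≤ ‖x - θ‖ * ‖η‖ := real_inner_le_norm _ _
  have hsq : ‖η‖ * ‖η‖ ≤ (M * ‖x - θ‖) * ‖η‖ := by
    have h5 : (1 / M) * ‖η‖ ^ 2 ≤ ‖x - θ‖ * ‖η‖ := le_trans key hcs
    have := mul_le_mul_of_nonneg_left h5 hM.le
    calc ‖η‖ * ‖η‖ = M * ((1 / M) * ‖η‖ ^ 2) := by field_simp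
    _ ≤ M * (‖x - θ‖ * ‖η‖) := this
    _ = (M * ‖x - θ‖) * ‖η‖ := by ring
  rcases eq_or_ne η 0 with h0 | h0
  · rw [h0, norm_zero]
    positivity
  · exact le_of_mul_le_mul_right hsq (norm_pos_iff.mpr h0)
end
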